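/- Let H be a finite abelian group and let C ⊆ H be such that every single element c ∈ C generates H (i.e. H = ⟨c⟩ for each c ∈ C) and C ∩ (−C) = ∅. Then for every positive integer r, either r·C* = H or |r·C*| ≥ 2·r·|C|, where C* = C ∪ (−C) ∪ {0}. -/

import Mathlib

open Finset Pointwise

/-- The `r`-fold sumset `{c₁ + ⋯ + c_r : cᵢ ∈ C}` (equal to `{0}` for `r = 0`). -/
def iterSumset {G : Type*} [AddCommGroup G] [DecidableEq G] : ℕ → Finset G → Finset G
  | 0, _ => {0}
  | r + 1, C => iterSumset r C + C

section aux

variable {H : Type*} [AddCommGroup H] [DecidableEq H]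


variable {H : Type*} [AddCommGroup H] [DecidableEq H]

lemma tr_add (A B : Finset H) (g : H) :
    (A.image (· + g)) + B = (A + B).image (· + g) := by
  ext x
  simp only [Finset.mem_add, Finset.mem_image]
  constructor
  · rintro ⟨y, ⟨a, ha, rfl⟩, b, hb, rfl⟩
    exact ⟨a + b, ⟨a, ha, b, hb, rfl⟩, add_right_comm a b g⟩
  · rintro ⟨y, ⟨a, ha, b, hb, rfl⟩, rfl⟩
    exact ⟨a + g, ⟨a, ha, rfl⟩, b, hb, add_right_comm a g b⟩

lemma tr_card (A : Finset H) (g : H) : (A.image (· + g)).card = A.card :=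
  Finset.card_image_of_injective _ (add_left_injective g)

lemma subset_add_self (A B : Finset H) (h0 : (0:H) ∈ B) : A ⊆ A + B := fun a ha =>
  Finset.mem_add.2 ⟨a, ha, 0, h0, add_zero a⟩

variable [Fintype H]

lemma tr_card' (A : Finset H) (g : H) : (A.image (· + g)).card = A.card :=
  Finset.card_image_of_injective _ (add_left_injective g)

variable [Fintype H]

lemma exists_good_K (B : Finset H) (h0 : (0:H) ∈ B) (hsym : ∀ x ∈ B, -x ∈ B)
    (hBne : B ≠ Finset.univ) :
    ∃ K : Finset H, (0:H) ∈ K ∧ (∀ x ∈ K, ∀ y ∈ K, x + y ∈ K) ∧ K + B ≠ Finset.univ ∧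
      ∀ S : Finset H, S.Nonempty → S + B ≠ Finset.univ →
        S.card + (K + B).card ≤ (S + B).card + K.card := by
  classical
  set M := Fintype.card H + 1 with hM
  have cardlt : ∀ X : Finset H, X.card < M := by
    intro X
    have := Finset.card_le_univ X
    omega
  set f : Finset H → ℕ := fun A => ((A + B).card - A.card) * M + A.card with hf
  set 𝒜 : Finset (Finset H) :=
    Finset.univ.filter (fun A => A.Nonempty ∧ A + B ≠ Finset.univ) with h𝒜
  have mem𝒜 : ∀ A : Finset H, A ∈ 𝒜 ↔ (A.Nonempty ∧ A + B ≠ Finset.univ) := by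
    intro A; simp [h𝒜]
  have h0B : ({0} : Finset H) + B = B := by
    ext x; simp [Finset.mem_add]
  have h0mem : ({0} : Finset H) ∈ 𝒜 := by
    rw [mem𝒜]
    exact ⟨Finset.singleton_nonempty 0, by rw [h0B]; exact hBne⟩
  obtain ⟨A₀, hA₀mem, hA₀min⟩ := Finset.exists_min_image 𝒜 f ⟨{0}, h0mem⟩
  have trmem : ∀ (A : Finset H) (g : H), A ∈ 𝒜 →
      A.image (· + g) ∈ 𝒜 ∧ f (A.image (· + g)) = f A := by
    intro A g hA
    rw [mem𝒜] at hA
    have h1 : (A.image (· + g)) + B = (A + B).image (· + g) := tr_add A B g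
    have hcard : ((A.image (· + g)) + B).card = (A + B).card := by rw [h1, tr_card]
    have hne : (A.image (· + g)) + B ≠ Finset.univ := by
      intro h
      exact hA.2 (Finset.eq_univ_of_card _ (by rw [← hcard, h, Finset.card_univ]))
    refine ⟨(mem𝒜 _).2 ⟨hA.1.image _, hne⟩, ?_⟩
    rw [hf]
    simp only [hcard, tr_card]
  obtain ⟨a₀, ha₀⟩ := ((mem𝒜 A₀).1 hA₀mem).1
  set K := A₀.image (· + (-a₀)) with hK
  have hKmem : K ∈ 𝒜 := (trmem A₀ (-a₀) hA₀mem).1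
  have hKmin : ∀ X ∈ 𝒜, f K ≤ f X := by
    intro X hX; rw [(trmem A₀ (-a₀) hA₀mem).2]; exact hA₀min X hX
  have hK0 : (0:H) ∈ K := Finset.mem_image.2 ⟨a₀, ha₀, by simp⟩
  have hKB_ne : K + B ≠ Finset.univ := ((mem𝒜 K).1 hKmem).2
  set κ := (K + B).card - K.card with hκdef
  have hKadd : (K + B).card = K.card + κ := by
    have := Finset.card_le_card (subset_add_self K B h0)
    omega
  -- the two key consequences of minimality
  have hκ_le : ∀ X : Finset H, X.Nonempty → X + B ≠ Finset.univ →
      X.card + κ ≤ (X + B).card := by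
    intro X hX1 hX2
    have hle := hKmin X ((mem𝒜 X).2 ⟨hX1, hX2⟩)
    have hsubX := Finset.card_le_card (subset_add_self X B h0)
    rw [hf] at hle
    simp only at hle
    rw [← hκdef] at hle
    set β := (X + B).card - X.card with hβ
    have hXadd : (X + B).card = X.card + β := by omega
    by_contra hc
    have hβκ : β + 1 ≤ κ := by omega
    have h2 : (β + 1) * M ≤ κ * M := Nat.mul_le_mul_right M hβκ
    rw [Nat.succ_mul] at h2
    have h3 := cardlt X
    have h4 := cardlt K
    omega
  have hatom : ∀ X : Finset H, X.Nonempty → X + B ≠ Finset.univ →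
      (X + B).card = X.card + κ → K.card ≤ X.card := by
    intro X hX1 hX2 hXfrag
    have hle := hKmin X ((mem𝒜 X).2 ⟨hX1, hX2⟩)
    rw [hf] at hle
    simp only at hle
    rw [← hκdef] at hle
    have hβ : (X + B).card - X.card = κ := by omega
    rw [hβ] at hle
    omega
  -- atoms: any translate of K meeting K equals K
  have hatoms : ∀ g : H, ((K.image (· + g)) ∩ K).Nonempty → K.image (· + g) = K := by
    intro g hne
    set F := K.image (· + g) with hF
    have hFmem : F ∈ 𝒜 := (trmem K g hKmem).1
    have hFcard : F.card = K.card := tr_card K g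
    have hFBcard : (F + B).card = (K + B).card := by rw [hF, tr_add, tr_card]
    have hIsub : (F ∩ K) + B ⊆ (F + B) ∩ (K + B) :=
      Finset.subset_inter (Finset.add_subset_add_right Finset.inter_subset_left)
        (Finset.add_subset_add_right Finset.inter_subset_right)
    have hUeq : (F ∪ K) + B = (F + B) ∪ (K + B) := Finset.union_add
    have hIne : (F ∩ K) + B ≠ Finset.univ := by
      intro h
      apply hKB_ne
      rw [← Finset.univ_subset_iff, ← h]
      exact Finset.add_subset_add_right Finset.inter_subset_right
    have hIκ := hκ_le (F ∩ K) hne hIne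
    have hIcard_le : ((F ∩ K) + B).card ≤ ((F + B) ∩ (K + B)).card :=
      Finset.card_le_card hIsub
    have hcui := Finset.card_inter_add_card_union (F + B) (K + B)
    have hcui2 := Finset.card_inter_add_card_union F K
    have hipos : 0 < (F ∩ K).card := hne.card_pos
    by_cases hU : (F ∪ K) + B = Finset.univ
    · exfalso
      have hnn : ((F + B) ∪ (K + B)).card = Fintype.card H := by
        rw [← hUeq, hU, Finset.card_univ]
      set Fs := (K + B)ᶜ with hFs
      have hFs_ne : Fs.Nonempty := by
        rw [hFs, ← Finset.card_pos, Finset.card_compl]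
        have h1 := Finset.card_le_univ (K + B)
        have h2 : (K + B).card ≠ Fintype.card H := fun h =>
          hKB_ne (Finset.eq_univ_of_card _ h)
        omega
      have hFsB : Fs + B ⊆ Kᶜ := by
        intro x hx
        obtain ⟨y, hy, b, hb, rfl⟩ := Finset.mem_add.1 hx
        rw [hFs, Finset.mem_compl] at hy
        rw [Finset.mem_compl]
        intro hxK
        exact hy (Finset.mem_add.2 ⟨y + b, hxK, -b, hsym b hb, by abel⟩)
      have hFsB_ne : Fs + B ≠ Finset.univ := by
        intro h
        have h2 : (0:H) ∈ Kᶜ := hFsB (h ▸ Finset.mem_univ 0)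
        rw [Finset.mem_compl] at h2
        exact h2 hK0
      have hκFs := hκ_le Fs hFs_ne hFsB_ne
      have hFscard : Fs.card + (K + B).card = Fintype.card H := by
        rw [hFs, Finset.card_compl]
        have := Finset.card_le_univ (K + B)
        omega
      have hFsB_le : (Fs + B).card ≤ Fintype.card H - K.card := by
        have h1 := Finset.card_le_card hFsB
        rw [Finset.card_compl] at h1
        exact h1
      have hKle := hatom Fs hFs_ne hFsB_ne (by
        have := Finset.card_le_univ K
        omega)
      omega
    · have hUne : (F ∪ K).Nonempty := hne.mono Finset.inter_subset_union
      have hUκ := hκ_le (F ∪ K) hUne hU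
      rw [hUeq] at hUκ
      have hIfrag : ((F ∩ K) + B).card = (F ∩ K).card + κ := by omega
      have hKlei := hatom (F ∩ K) hne hIne hIfrag
      have h1 : F ∩ K = F :=
        Finset.eq_of_subset_of_card_le Finset.inter_subset_left (by omega)
      have h2 : F ∩ K = K :=
        Finset.eq_of_subset_of_card_le Finset.inter_subset_right (by omega)
      rw [← h1, h2]
  -- closure under addition
  have hclosed : ∀ x ∈ K, ∀ y ∈ K, x + y ∈ K := by
    intro x hx y hy
    have h := hatoms y ⟨y, Finset.mem_inter.2
      ⟨Finset.mem_image.2 ⟨0, hK0, zero_add y⟩, hy⟩⟩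
    rw [← h]
    exact Finset.mem_image.2 ⟨x, hx, rfl⟩
  refine ⟨K, hK0, hclosed, hKB_ne, ?_⟩
  intro S hS1 hS2
  have := hκ_le S hS1 hS2
  omega

lemma count_lemma (C K : Finset H)
    (hgen : ∀ c ∈ C, AddSubgroup.zmultiples c = ⊤)
    (hdisj : ∀ c ∈ C, -c ∉ C)
    (hK0 : (0:H) ∈ K) (hclosed : ∀ x ∈ K, ∀ y ∈ K, x + y ∈ K)
    (hKne : K ≠ Finset.univ) :
    K.card + 2 * C.card ≤ (K + (C ∪ (-C) ∪ {0})).card := by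
  classical
  set B := C ∪ (-C) ∪ {0} with hB
  have hneg : ∀ k ∈ K, -k ∈ K := by
    intro k hk
    have himg : K.image (· + k) ⊆ K := by
      intro x hx
      obtain ⟨y, hy, rfl⟩ := Finset.mem_image.1 hx
      exact hclosed y hy k hk
    have himgeq : K.image (· + k) = K :=
      Finset.eq_of_subset_of_card_le himg (le_of_eq (tr_card' K k).symm)
    obtain ⟨y, hy, hyk⟩ := Finset.mem_image.1 (himgeq.symm ▸ hK0)
    have : y = -k := eq_neg_of_add_eq_zero_left hyk
    exact this ▸ hy
  set K' : AddSubgroup H :=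
    { carrier := ↑K
      add_mem' := fun {a b} ha hb => hclosed a ha b hb
      zero_mem' := hK0
      neg_mem' := fun {a} ha => hneg a ha } with hK'
  have hCK' : ∀ c ∈ C, c ∉ K' := by
    intro c hc hmem
    apply hKne
    apply Finset.eq_univ_of_forall
    intro x
    have htop : (⊤ : AddSubgroup H) ≤ K' := by
      rw [← hgen c hc]
      exact AddSubgroup.zmultiples_le.2 hmem
    exact htop (AddSubgroup.mem_top x)
  letI : Fintype (H ⧸ K') := Fintype.ofFinite _
  letI : DecidableEq (H ⧸ K') := Classical.decEq _
  set π : H →+ H ⧸ K' := QuotientAddGroup.mk' K' with hπ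
  have hπeq : ∀ x y : H, π x = π y ↔ ∃ z ∈ K, x + z = y := by
    intro x y
    rw [hπ, QuotientAddGroup.mk'_eq_mk']
    rfl
  have hπ0 : ∀ x : H, π x = 0 ↔ x ∈ K := by
    intro x
    rw [show (0 : H ⧸ K') = π 0 from (map_zero π).symm, hπeq]
    constructor
    · rintro ⟨z, hz, hxz⟩
      have : x = -z := eq_neg_of_add_eq_zero_left hxz
      rw [this]; exact hneg z hz
    · intro hx; exact ⟨-x, hneg x hx, by abel⟩
  have hfiber : ∀ x : H, Finset.univ.filter (fun y => π y = π x) = K.image (· + x) := by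
    intro x
    ext y
    simp only [Finset.mem_filter, Finset.mem_univ, true_and, Finset.mem_image]
    rw [hπeq]
    constructor
    · rintro ⟨z, hz, hzx⟩
      exact ⟨-z, hneg z hz, by rw [← hzx]; abel⟩
    · rintro ⟨k, hk, rfl⟩
      exact ⟨-k, hneg k hk, by abel⟩
  have hfibercard : ∀ x : H, (Finset.univ.filter (fun y => π y = π x)).card = K.card := by
    intro x; rw [hfiber, tr_card']
  have hcount : ∀ W : Finset H, (∀ w ∈ W, ∀ k ∈ K, w + k ∈ W) →
      W.card = K.card * (W.image π).card := by
    intro W hW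
    rw [Finset.card_eq_sum_card_image π W]
    have heach : ∀ q ∈ W.image π, (W.filter (fun y => π y = q)).card = K.card := by
      intro q hq
      obtain ⟨w, hw, rfl⟩ := Finset.mem_image.1 hq
      have heq : W.filter (fun y => π y = π w) = Finset.univ.filter (fun y => π y = π w) := by
        ext y
        simp only [Finset.mem_filter, Finset.mem_univ, true_and]
        constructor
        · exact fun h => h.2
        · intro hy
          refine ⟨?_, hy⟩
          obtain ⟨z, hz, hzw⟩ := (hπeq y w).1 hy
          have h2 : w + (-z) = y := by rw [← hzw]; abel
          exact h2 ▸ hW w hw (-z) (hneg z hz)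
      rw [heq, hfibercard]
    rw [Finset.sum_congr rfl heach, Finset.sum_const, smul_eq_mul, mul_comm]
  have hKB_closed : ∀ w ∈ K + B, ∀ k ∈ K, w + k ∈ K + B := by
    intro w hw k hk
    obtain ⟨k', hk', b, hb, rfl⟩ := Finset.mem_add.1 hw
    exact Finset.mem_add.2 ⟨k' + k, hclosed k' hk' k hk, b, hb, by abel⟩
  have hKBcount : (K + B).card = K.card * ((K + B).image π).card := hcount _ hKB_closed
  have hBsub : B ⊆ K + B := fun b hb => Finset.mem_add.2 ⟨0, hK0, b, hb, zero_add b⟩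
  have himg1 : (K + B).image π = B.image π := by
    apply Finset.Subset.antisymm
    · intro q hq
      obtain ⟨x, hx, rfl⟩ := Finset.mem_image.1 hq
      obtain ⟨k, hk, b, hb, rfl⟩ := Finset.mem_add.1 hx
      refine Finset.mem_image.2 ⟨b, hb, ?_⟩
      rw [hπeq]
      exact ⟨k, hk, by abel⟩
    · exact Finset.image_subset_image hBsub
  set U := C.image π ∪ (-C).image π with hU
  have himg2 : B.image π = U ∪ {(0 : H ⧸ K')} := by
    rw [hB, Finset.image_union, Finset.image_union, Finset.image_singleton, hU]
    congr 1
  have h0notU : (0 : H ⧸ K') ∉ U := by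
    intro h0U
    rw [hU, Finset.mem_union] at h0U
    rcases h0U with h | h
    · obtain ⟨c, hc, hc0⟩ := Finset.mem_image.1 h
      exact hCK' c hc ((hπ0 c).1 hc0)
    · obtain ⟨x, hx, hx0⟩ := Finset.mem_image.1 h
      obtain ⟨c, hc, rfl⟩ := Finset.mem_neg.1 hx
      have hcK : -c ∈ K := (hπ0 _).1 hx0
      exact hCK' c hc (show c ∈ K by simpa using hneg _ hcK)
  have hUcard : (B.image π).card = U.card + 1 := by
    rw [himg2, Finset.card_union_of_disjoint (Finset.disjoint_singleton_right.2 h0notU),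
      Finset.card_singleton]
  have hCdisjneg : Disjoint C (-C) := by
    rw [Finset.disjoint_left]
    intro x hx hxneg
    obtain ⟨c, hc, rfl⟩ := Finset.mem_neg.1 hxneg
    exact hdisj c hc hx
  have hfib_le : ∀ q : H ⧸ K',
      (C.filter (fun c => π c = q)).card + ((-C).filter (fun c => π c = q)).card ≤ K.card := by
    intro q
    obtain ⟨x, rfl⟩ := QuotientAddGroup.mk'_surjective K' q
    have hsub : (C.filter (fun c => π c = π x)) ∪ ((-C).filter (fun c => π c = π x)) ⊆
        Finset.univ.filter (fun y => π y = π x) := by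
      intro y hy
      rw [Finset.mem_union] at hy
      rcases hy with hy | hy
      · exact Finset.mem_filter.2 ⟨Finset.mem_univ y, (Finset.mem_filter.1 hy).2⟩
      · exact Finset.mem_filter.2 ⟨Finset.mem_univ y, (Finset.mem_filter.1 hy).2⟩
    have hdisj2 : Disjoint (C.filter (fun c => π c = π x)) ((-C).filter (fun c => π c = π x)) :=
      hCdisjneg.mono (Finset.filter_subset _ _) (Finset.filter_subset _ _)
    have hle := Finset.card_le_card hsub
    rw [Finset.card_union_of_disjoint hdisj2, hfibercard x] at hle
    exact hle
  have hzerofilter : ∀ (D : Finset H) (q : H ⧸ K'), q ∉ D.image π →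
      (D.filter (fun c => π c = q)).card = 0 := by
    intro D q hnq
    rw [Finset.card_eq_zero, Finset.filter_eq_empty_iff]
    intro c hc hcq
    exact hnq (Finset.mem_image.2 ⟨c, hc, hcq⟩)
  have hsum1 : ∑ q ∈ U, (C.filter (fun c => π c = q)).card = C.card := by
    rw [Finset.card_eq_sum_card_image π C]
    exact (Finset.sum_subset (hU ▸ Finset.subset_union_left)
      (fun q _ hnq => hzerofilter C q hnq)).symm
  have hsum2 : ∑ q ∈ U, ((-C).filter (fun c => π c = q)).card = C.card := by
    rw [← Finset.card_neg C, Finset.card_eq_sum_card_image π (-C)]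
    exact (Finset.sum_subset (hU ▸ Finset.subset_union_right)
      (fun q _ hnq => hzerofilter (-C) q hnq)).symm
  have hfinal : 2 * C.card ≤ U.card * K.card := by
    have h1 : ∑ q ∈ U, ((C.filter (fun c => π c = q)).card
        + ((-C).filter (fun c => π c = q)).card) = 2 * C.card := by
      rw [Finset.sum_add_distrib, hsum1, hsum2]; ring
    calc 2 * C.card
        = ∑ q ∈ U, ((C.filter (fun c => π c = q)).card
          + ((-C).filter (fun c => π c = q)).card) := h1.symm
      _ ≤ ∑ _q ∈ U, K.card := Finset.sum_le_sum (fun q _ => hfib_le q)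
      _ = U.card * K.card := by rw [Finset.sum_const, smul_eq_mul]
  rw [hKBcount, himg1, hUcard]
  have hmul : K.card * (U.card + 1) = K.card + K.card * U.card := by ring
  rw [hmul]
  exact Nat.add_le_add_left (hfinal.trans (mul_comm U.card K.card).le) K.card

lemma key_lemma (C : Finset H)
    (hgen : ∀ c ∈ C, AddSubgroup.zmultiples c = ⊤)
    (hdisj : ∀ c ∈ C, -c ∉ C)
    (S : Finset H) (hS : S.Nonempty)
    (hSB : S + (C ∪ (-C) ∪ {0}) ≠ Finset.univ) :
    S.card + 2 * C.card ≤ (S + (C ∪ (-C) ∪ {0})).card := by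
  classical
  set B := C ∪ (-C) ∪ {0} with hB
  have hB0 : (0:H) ∈ B := by simp [hB]
  have hsym : ∀ x ∈ B, -x ∈ B := by
    intro x hx
    rw [hB, Finset.mem_union, Finset.mem_union] at hx ⊢
    rcases hx with (hx | hx) | hx
    · exact Or.inl (Or.inr (Finset.neg_mem_neg hx))
    · obtain ⟨c, hc, rfl⟩ := Finset.mem_neg.1 hx
      exact Or.inl (Or.inl (by simpa using hc))
    · rw [Finset.mem_singleton] at hx
      subst hx
      simp
  have hBne : B ≠ Finset.univ := by
    intro h
    apply hSB
    obtain ⟨s, hs⟩ := hS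
    apply Finset.eq_univ_of_forall
    intro x
    exact Finset.mem_add.2 ⟨s, hs, x - s, by rw [h]; exact Finset.mem_univ _, by abel⟩
  obtain ⟨K, hK0, hclosed, hKBne, hmain⟩ := exists_good_K B hB0 hsym hBne
  have hKne : K ≠ Finset.univ := by
    intro h
    apply hKBne
    rw [← Finset.univ_subset_iff, ← h]
    exact subset_add_self K B hB0
  have hcount := count_lemma C K hgen hdisj hK0 hclosed hKne
  have hm := hmain S hS hSB
  rw [← hB] at hcount
  omega

end aux

theorem stmt10 {H : Type*} [AddCommGroup H] [Fintype H] [DecidableEq H]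
    (C : Finset H)
    (hgen : ∀ c ∈ C, AddSubgroup.zmultiples c = ⊤)
    (hdisj : ∀ c ∈ C, -c ∉ C) :
    ∀ r : ℕ, 0 < r →
      iterSumset r (C ∪ (-C) ∪ {0}) = Finset.univ ∨
        ((iterSumset r (C ∪ (-C) ∪ {0})).card : ℝ) ≥ 2 * r * C.card := by
  classical
  intro r hr
  set B := C ∪ (-C) ∪ {0} with hB
  have hB0 : (0:H) ∈ B := by simp [hB]
  have hstep : ∀ (k : ℕ), iterSumset (k+1) B = iterSumset k B + B := fun k => rfl
  have h0mem : ∀ k, (0:H) ∈ iterSumset k B := by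
    intro k
    induction k with
    | zero => simp [iterSumset]
    | succ m ih =>
      rw [hstep]
      exact Finset.mem_add.2 ⟨0, ih, 0, hB0, add_zero 0⟩
  have main : ∀ k : ℕ, 0 < k →
      iterSumset k B = Finset.univ ∨ 2 * k * C.card ≤ (iterSumset k B).card := by
    intro k
    induction k with
    | zero => omega
    | succ m ih =>
      intro _
      by_cases hu : iterSumset (m+1) B = Finset.univ
      · exact Or.inl hu
      right
      rcases Nat.eq_zero_or_pos m with hm | hm
      · subst hm
        have h1 : iterSumset 1 B = B := by
          rw [hstep 0]
          show ({0} : Finset H) + B = B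
          ext x; simp [Finset.mem_add]
        rw [h1]
        have hCdisjneg : Disjoint C (-C) := by
          rw [Finset.disjoint_left]
          intro x hx hxneg
          obtain ⟨c, hc, rfl⟩ := Finset.mem_neg.1 hxneg
          exact hdisj c hc hx
        calc 2 * 1 * C.card = C.card + (-C).card := by rw [Finset.card_neg]; ring
          _ = (C ∪ -C).card := (Finset.card_union_of_disjoint hCdisjneg).symm
          _ ≤ B.card := Finset.card_le_card (hB ▸ Finset.subset_union_left)
      · have hSne : iterSumset m B ≠ Finset.univ := by
          intro h
          apply hu
          rw [← Finset.univ_subset_iff, ← h, hstep]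
          exact subset_add_self _ _ hB0
        rcases ih hm with h | h
        · exact absurd h hSne
        · have hkey := key_lemma C hgen hdisj (iterSumset m B) ⟨0, h0mem m⟩
            (by rw [← hB, ← hstep]; exact hu)
          rw [hstep]
          rw [← hB] at hkey
          have harith : 2 * (m+1) * C.card = 2 * m * C.card + 2 * C.card := by ring
          omega
  rcases main r hr with h | h
  · exact Or.inl h
  · right
    rw [ge_iff_le]
    calc (2:ℝ) * r * C.card = ((2 * r * C.card : ℕ) : ℝ) := by push_cast; ring
      _ ≤ _ := Nat.cast_le.2 h
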